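/- Let X be a real Banach space. For ε ∈ [0,2]: φ⁺_X(ε) ≤ γ⁺_X(ε) ≤ 2·φ⁺_X(ε), where φ⁺_X(ε) = sup{p(x − z) : x, z ∈ S, ‖x − z‖ ≤ ε, p ∈ J₁(x)} and γ⁺_X(ε) = sup{(p₁ − p₂)(x₁ − x₂) : x₁, x₂ ∈ S, ‖x₁ − x₂‖ ≤ ε, p₁ ∈ J₁(x₁), p₂ ∈ J₁(x₂)}. -/

import Mathlib

noncomputable def phiPlus (X : Type*) [NormedAddCommGroup X] [NormedSpace ℝ X] (ε : ℝ) : ℝ :=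
  sSup {r : ℝ | ∃ (x z : X) (p : X →L[ℝ] ℝ), ‖x‖ = 1 ∧ ‖z‖ = 1 ∧ ‖x - z‖ ≤ ε ∧
    ‖p‖ = 1 ∧ p x = 1 ∧ r = p (x - z)}

noncomputable def gammaPlus (X : Type*) [NormedAddCommGroup X] [NormedSpace ℝ X] (ε : ℝ) : ℝ :=
  sSup {r : ℝ | ∃ (x₁ x₂ : X) (p₁ p₂ : X →L[ℝ] ℝ), ‖x₁‖ = 1 ∧ ‖x₂‖ = 1 ∧ ‖x₁ - x₂‖ ≤ ε ∧
    ‖p₁‖ = 1 ∧ p₁ x₁ = 1 ∧ ‖p₂‖ = 1 ∧ p₂ x₂ = 1 ∧ r = (p₁ - p₂) (x₁ - x₂)}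

theorem stmt16 {X : Type*} [NormedAddCommGroup X] [NormedSpace ℝ X] [CompleteSpace X]
    (ε : ℝ) (hε : ε ∈ Set.Icc (0:ℝ) 2) :
    phiPlus X ε ≤ gammaPlus X ε ∧ gammaPlus X ε ≤ 2 * phiPlus X ε := by
  set Sφ := {r : ℝ | ∃ (x z : X) (p : X →L[ℝ] ℝ), ‖x‖ = 1 ∧ ‖z‖ = 1 ∧ ‖x - z‖ ≤ ε ∧
    ‖p‖ = 1 ∧ p x = 1 ∧ r = p (x - z)} with hSφ
  set Sγ := {r : ℝ | ∃ (x₁ x₂ : X) (p₁ p₂ : X →L[ℝ] ℝ), ‖x₁‖ = 1 ∧ ‖x₂‖ = 1 ∧ ‖x₁ - x₂‖ ≤ ε ∧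
    ‖p₁‖ = 1 ∧ p₁ x₁ = 1 ∧ ‖p₂‖ = 1 ∧ p₂ x₂ = 1 ∧ r = (p₁ - p₂) (x₁ - x₂)} with hSγ
  have hφeq : phiPlus X ε = sSup Sφ := rfl
  have hγeq : gammaPlus X ε = sSup Sγ := rfl
  have hφbdd : BddAbove Sφ := by
    refine ⟨2, ?_⟩
    rintro r ⟨x, z, p, hx, hz, hxz, hp, hpx, rfl⟩
    calc p (x - z) ≤ ‖p (x - z)‖ := le_abs_self _
      _ ≤ ‖p‖ * ‖x - z‖ := p.le_opNorm _
      _ ≤ 1 * 2 := by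
          apply mul_le_mul (le_of_eq hp) (le_trans (norm_sub_le _ _) (by rw [hx, hz]; norm_num))
            (norm_nonneg _) zero_le_one
      _ = 2 := by norm_num
  have hγbdd : BddAbove Sγ := by
    refine ⟨4, ?_⟩
    rintro r ⟨x₁, x₂, p₁, p₂, hx₁, hx₂, hxx, hp₁, hp₁x, hp₂, hp₂x, rfl⟩
    have h := (p₁ - p₂).le_opNorm (x₁ - x₂)
    have hn : ‖p₁ - p₂‖ ≤ 2 := le_trans (norm_sub_le _ _) (by rw [hp₁, hp₂]; norm_num)
    have hm : ‖x₁ - x₂‖ ≤ 2 := le_trans (norm_sub_le _ _) (by rw [hx₁, hx₂]; norm_num)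
    calc (p₁ - p₂) (x₁ - x₂) ≤ ‖(p₁ - p₂) (x₁ - x₂)‖ := le_abs_self _
      _ ≤ ‖p₁ - p₂‖ * ‖x₁ - x₂‖ := h
      _ ≤ 2 * 2 := mul_le_mul hn hm (norm_nonneg _) (by norm_num)
      _ = 4 := by norm_num
  rcases subsingleton_or_nontrivial X with hS | hN
  · have hφe : Sφ = ∅ := by
      ext r
      simp only [Set.mem_setOf_eq, Set.mem_empty_iff_false, iff_false]
      rintro ⟨x, z, p, hx, _⟩
      have : x = 0 := Subsingleton.elim x 0
      rw [this, norm_zero] at hx; norm_num at hx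
    have hγe : Sγ = ∅ := by
      ext r
      simp only [Set.mem_setOf_eq, Set.mem_empty_iff_false, iff_false]
      rintro ⟨x, z, p₁, p₂, hx, _⟩
      have : x = 0 := Subsingleton.elim x 0
      rw [this, norm_zero] at hx; norm_num at hx
    rw [hφeq, hγeq, hφe, hγe, Real.sSup_empty]
    norm_num
  · -- nontrivial: get a unit vector
    obtain ⟨x₀, hx₀⟩ := exists_norm_eq X (zero_le_one (α := ℝ))
    have hx₀ne : x₀ ≠ 0 := by intro h; rw [h, norm_zero] at hx₀; norm_num at hx₀
    obtain ⟨p₀, hp₀, hp₀x⟩ := exists_dual_vector ℝ x₀ (norm_ne_zero_iff.mpr hx₀ne)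
    rw [hx₀] at hp₀x
    have h0φ : (0:ℝ) ∈ Sφ := ⟨x₀, x₀, p₀, hx₀, hx₀, by simpa using hε.1, hp₀, by
      simpa using hp₀x, by simp⟩
    have h0γ : (0:ℝ) ∈ Sγ := ⟨x₀, x₀, p₀, p₀, hx₀, hx₀, by simpa using hε.1, hp₀, by
      simpa using hp₀x, hp₀, by simpa using hp₀x, by simp⟩
    have hφ0 : 0 ≤ sSup Sφ := le_csSup hφbdd h0φ
    have hγ0 : 0 ≤ sSup Sγ := le_csSup hγbdd h0γ
    constructor
    · rw [hφeq, hγeq]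
      refine Real.sSup_le ?_ hγ0
      rintro r ⟨x, z, p, hx, hz, hxz, hp, hpx, rfl⟩
      have hzne : z ≠ 0 := by intro h; rw [h, norm_zero] at hz; norm_num at hz
      obtain ⟨q, hq, hqz⟩ := exists_dual_vector ℝ z (norm_ne_zero_iff.mpr hzne)
      rw [hz] at hqz
      have hqz' : q z = 1 := by simpa using hqz
      have hmem : ((p - q) (x - z)) ∈ Sγ :=
        ⟨x, z, p, q, hx, hz, hxz, hp, hpx, hq, hqz', rfl⟩
      have hle : p (x - z) ≤ (p - q) (x - z) := by
        have hqx : q x ≤ 1 := by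
          calc q x ≤ ‖q x‖ := le_abs_self _
            _ ≤ ‖q‖ * ‖x‖ := q.le_opNorm _
            _ = 1 := by rw [hq, hx]; ring
        simp only [ContinuousLinearMap.sub_apply, map_sub, hqz']
        linarith
      exact hle.trans (le_csSup hγbdd hmem)
    · rw [hφeq, hγeq]
      refine Real.sSup_le ?_ (by linarith)
      rintro r ⟨x₁, x₂, p₁, p₂, hx₁, hx₂, hxx, hp₁, hp₁x, hp₂, hp₂x, rfl⟩
      have hxx' : ‖x₂ - x₁‖ ≤ ε := by rwa [norm_sub_rev]
      have h1 : p₁ (x₁ - x₂) ∈ Sφ := ⟨x₁, x₂, p₁, hx₁, hx₂, hxx, hp₁, hp₁x, rfl⟩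
      have h2 : p₂ (x₂ - x₁) ∈ Sφ := ⟨x₂, x₁, p₂, hx₂, hx₁, hxx', hp₂, hp₂x, rfl⟩
      have e1 : p₁ (x₁ - x₂) ≤ sSup Sφ := le_csSup hφbdd h1
      have e2 : p₂ (x₂ - x₁) ≤ sSup Sφ := le_csSup hφbdd h2
      have : (p₁ - p₂) (x₁ - x₂) = p₁ (x₁ - x₂) + p₂ (x₂ - x₁) := by
        simp only [ContinuousLinearMap.sub_apply, map_sub]; ring
      rw [this]; linarith
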